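/- Let L be a Lie algebra over a field K of characteristic zero with basis X₁,…,Xₙ, and let 𝒜 be the free associative K-algebra on X₁,…,Xₙ with J the two-sided ideal generated by the elements XY − YX − [X,Y] for X, Y ∈ L. Then every element of 𝒜 is congruent modulo J to a regular polynomial (a K-linear combination of powers of K-linear combinations of the generators). -/

import Mathlib

open scoped BigOperators

noncomputable section

/-- The word `X₁^{α₁} ⋯ Xₙ^{αₙ}` as a list of generator indices. -/
def word (n : ℕ) (α : Fin n → ℕ) : List (Fin n) :=
  (List.finRange n).flatMap fun i => List.replicate (α i) i

/-- The symmetrization `symz(X^(α)) = (1/m!) ∑_{σ ∈ Σₘ} X'_{σ(1)} ⋯ X'_{σ(m)}`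
of the monomial `X^(α)` in the free associative algebra. -/
def symz (K : Type) [Field K] (n : ℕ) (α : Fin n → ℕ) : FreeAlgebra K (Fin n) :=
  ((Nat.factorial (word n α).length : K))⁻¹ •
    ∑ σ : Equiv.Perm (Fin (word n α).length),
      (List.ofFn fun j => FreeAlgebra.ι K ((word n α).get (σ j))).prod

/-- Regular homogeneous polynomials of degree `m`: the span of `m`-th powers of
linear forms in the generators. -/
def RegHom (K : Type) [Field K] (n m : ℕ) : Submodule K (FreeAlgebra K (Fin n)) :=
  Submodule.span K {x | ∃ c : Fin n → K, x = (∑ i, c i • FreeAlgebra.ι K i) ^ m}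

/-- Regular polynomials: the span of all powers of linear forms in the generators. -/
def Reg (K : Type) [Field K] (n : ℕ) : Submodule K (FreeAlgebra K (Fin n)) :=
  Submodule.span K {x | ∃ (m : ℕ) (c : Fin n → K), x = (∑ i, c i • FreeAlgebra.ι K i) ^ m}

/-- The symmetrization map `Φ` from commutative polynomials to the free algebra,
sending `x^(α)` to `symz(X^(α))` and extended linearly. -/
def Phi (K : Type) [Field K] (n : ℕ) (p : MvPolynomial (Fin n) K) : FreeAlgebra K (Fin n) :=
  ∑ d ∈ p.support, p.coeff d • symz K n (fun i => d i)


/-- The embedding of the Lie algebra `L` into the free algebra via the basis `b`. -/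
def emb (K : Type) [Field K] (n : ℕ) {L : Type} [LieRing L] [LieAlgebra K L]
    (b : Module.Basis (Fin n) K L) (x : L) : FreeAlgebra K (Fin n) :=
  ∑ k, b.repr x k • FreeAlgebra.ι K k

/-- The two-sided ideal `J` generated by `XY - YX - [X,Y]`, `X, Y ∈ L`, realized as the
span of all trinomial products `P (XY - YX - [X,Y]) Q`. -/
def Jspan (K : Type) [Field K] (n : ℕ) {L : Type} [LieRing L] [LieAlgebra K L]
    (b : Module.Basis (Fin n) K L) : Submodule K (FreeAlgebra K (Fin n)) :=
  Submodule.span K {x | ∃ (P Q : FreeAlgebra K (Fin n)) (X Y : L),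
    x = P * (emb K n b X * emb K n b Y - emb K n b Y * emb K n b X - emb K n b ⁅X, Y⁆) * Q}

/-- Elements of degree at most `k` in the free algebra. -/
def Fdeg (K : Type) [Field K] (n k : ℕ) : Submodule K (FreeAlgebra K (Fin n)) :=
  Submodule.span K {x | ∃ l : List (Fin n), l.length ≤ k ∧ x = (l.map (FreeAlgebra.ι K)).prod}


lemma pow_expand {R : Type} [Ring R] {m : ℕ} (x : Fin m → R) (S : Finset (Fin m)) (p : ℕ) :
    (∑ j ∈ S, x j) ^ p =
      ∑ f : Fin p → Fin m, if ∀ k, f k ∈ S then (List.ofFn (x ∘ f)).prod else 0 := by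
  induction p with
  | zero => simp
  | succ p ih =>
    have key : ∀ f : Fin (p+1) → Fin m,
        (if ∀ k, f k ∈ S then (List.ofFn (x ∘ f)).prod else 0) =
        (if f 0 ∈ S then x (f 0) else 0) *
          (if ∀ k : Fin p, f k.succ ∈ S then (List.ofFn (x ∘ f ∘ Fin.succ)).prod else 0) := by
      intro f
      have h2 : List.ofFn (x ∘ f) = x (f 0) :: List.ofFn (x ∘ f ∘ Fin.succ) := by
        rw [List.ofFn_succ]; rfl
      by_cases h0 : f 0 ∈ S <;> by_cases hs : ∀ k : Fin p, f k.succ ∈ S <;>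
        simp [Fin.forall_fin_succ, h0, hs, h2, List.prod_cons, Function.comp_def]
    calc (∑ j ∈ S, x j) ^ (p+1) = (∑ j ∈ S, x j) * (∑ j ∈ S, x j) ^ p := by rw [pow_succ']
    _ = (∑ a : Fin m, if a ∈ S then x a else 0) *
          (∑ g : Fin p → Fin m, if ∀ k, g k ∈ S then (List.ofFn (x ∘ g)).prod else 0) := by
        rw [← ih, Finset.sum_ite_mem, Finset.univ_inter]
    _ = ∑ a : Fin m, ∑ g : Fin p → Fin m, (if a ∈ S then x a else 0) *
          (if ∀ k, g k ∈ S then (List.ofFn (x ∘ g)).prod else 0) := by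
        rw [Finset.sum_mul_sum]
    _ = ∑ f : Fin (p+1) → Fin m, if ∀ k, f k ∈ S then (List.ofFn (x ∘ f)).prod else 0 := by
        rw [← Equiv.sum_comp (Fin.consEquiv fun _ => Fin m)
          (fun f => if ∀ k, f k ∈ S then (List.ofFn (x ∘ f)).prod else 0),
          Fintype.sum_prod_type]
        refine Finset.sum_congr rfl fun a _ => Finset.sum_congr rfl fun g _ => ?_
        have hc : ((Fin.consEquiv fun _ => Fin m) (a, g) : Fin (p+1) → Fin m)
            = Fin.cons a g := rfl
        rw [key, hc]
        have hsucc : (x ∘ Fin.cons a g ∘ Fin.succ) = x ∘ g := by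
          funext k; simp [Function.comp, Fin.cons_succ]
        simp [Fin.cons_zero, Fin.cons_succ, hsucc]


lemma polarization {R : Type} [Ring R] {m : ℕ} (x : Fin m → R) :
    ∑ S ∈ (Finset.univ : Finset (Fin m)).powerset,
        (-1:ℤ)^(m - S.card) • (∑ j ∈ S, x j)^m
      = ∑ σ : Equiv.Perm (Fin m), (List.ofFn (x ∘ σ)).prod := by
  classical
  have step1 : ∑ S ∈ (Finset.univ : Finset (Fin m)).powerset,
      (-1:ℤ)^(m - S.card) • (∑ j ∈ S, x j)^m
      = ∑ f : Fin m → Fin m,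
          (∑ S ∈ (Finset.univ : Finset (Fin m)).powerset,
            if ∀ k, f k ∈ S then (-1:ℤ)^(m - S.card) else 0) • (List.ofFn (x ∘ f)).prod := by
    have e1 : ∀ S ∈ (Finset.univ : Finset (Fin m)).powerset,
        (-1:ℤ)^(m - S.card) • (∑ j ∈ S, x j)^m
        = ∑ f : Fin m → Fin m,
            (if ∀ k, f k ∈ S then (-1:ℤ)^(m - S.card) else 0) • (List.ofFn (x ∘ f)).prod := by
      intro S _
      rw [pow_expand, Finset.smul_sum]
      refine Finset.sum_congr rfl fun f _ => ?_
      by_cases h : ∀ k, f k ∈ S <;> simp [h]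
    rw [Finset.sum_congr rfl e1, Finset.sum_comm]
    exact Finset.sum_congr rfl fun f _ => (Finset.sum_smul).symm
  have inner : ∀ f : Fin m → Fin m,
      (∑ S ∈ (Finset.univ : Finset (Fin m)).powerset,
        if ∀ k, f k ∈ S then (-1:ℤ)^(m - S.card) else 0)
      = if Function.Bijective f then 1 else 0 := by
    intro f
    set T : Finset (Fin m) := Finset.image f Finset.univ with hT
    have hcond : ∀ S : Finset (Fin m), (∀ k, f k ∈ S) ↔ T ⊆ S := by
      intro S
      constructor
      · intro h a ha
        obtain ⟨k, _, rfl⟩ := Finset.mem_image.mp ha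
        exact h k
      · intro h k
        exact h (Finset.mem_image.mpr ⟨k, Finset.mem_univ k, rfl⟩)
    rw [Finset.sum_congr rfl (fun S _ => by rw [if_congr (hcond S) rfl rfl])]
    rw [← Finset.sum_filter]
    have hbij : ∑ S ∈ (Finset.univ : Finset (Fin m)).powerset.filter (T ⊆ ·),
        (-1:ℤ)^(m - S.card) = ∑ U ∈ Tᶜ.powerset, (-1:ℤ)^U.card := by
      refine Finset.sum_nbij' (fun S => Sᶜ) (fun U => Uᶜ) ?_ ?_ ?_ ?_ ?_
      · intro S hS
        simp only [Finset.mem_filter, Finset.mem_powerset] at hS ⊢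
        exact Finset.compl_subset_compl.mpr hS.2
      · intro U hU
        simp only [Finset.mem_powerset] at hU
        simp only [Finset.mem_filter, Finset.mem_powerset]
        exact ⟨Finset.subset_univ _, by rwa [← Finset.compl_subset_compl, compl_compl] at hU⟩
      · intro S _; exact compl_compl S
      · intro U _; exact compl_compl U
      · intro S _
        congr 1
        rw [Finset.card_compl, Fintype.card_fin]
    rw [hbij, Finset.sum_powerset_neg_one_pow_card]
    have hTuniv : Tᶜ = ∅ ↔ Function.Bijective f := by
      rw [Finset.compl_eq_empty_iff]
      constructor
      · intro h
        have hs : Function.Surjective f := by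
          intro b
          have : b ∈ T := h ▸ Finset.mem_univ b
          obtain ⟨k, _, hk⟩ := Finset.mem_image.mp this
          exact ⟨k, hk⟩
        exact ⟨Finite.injective_iff_surjective.mpr hs, hs⟩
      · intro h
        apply Finset.eq_univ_of_forall
        intro b
        obtain ⟨k, hk⟩ := h.2 b
        exact Finset.mem_image.mpr ⟨k, Finset.mem_univ k, hk⟩
    rw [if_congr hTuniv rfl rfl]
  rw [step1, Finset.sum_congr rfl fun f _ => by rw [inner f]]
  have e2 : ∀ f : Fin m → Fin m,
      ((if Function.Bijective f then (1:ℤ) else 0) • (List.ofFn (x ∘ f)).prod)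
      = if Function.Bijective f then (List.ofFn (x ∘ f)).prod else 0 := by
    intro f
    by_cases h : Function.Bijective f <;> simp [h]
  rw [Finset.sum_congr rfl fun f _ => e2 f, ← Finset.sum_filter]
  refine (Finset.sum_bij (fun (σ : Equiv.Perm (Fin m)) _ => (σ : Fin m → Fin m))
    ?_ ?_ ?_ ?_).symm
  · intro σ _
    exact Finset.mem_filter.mpr ⟨Finset.mem_univ _, σ.bijective⟩
  · intro σ₁ _ σ₂ _ h
    exact Equiv.coe_fn_injective h
  · intro f hf
    simp only [Finset.mem_filter] at hf
    exact ⟨Equiv.ofBijective f hf.2, Finset.mem_univ _, rfl⟩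
  · intro σ _
    rfl


section Aux

variable (K : Type) [Field K] (n : ℕ) {L : Type} [LieRing L] [LieAlgebra K L]
  (b : Module.Basis (Fin n) K L)

local notation "ι" => FreeAlgebra.ι K

lemma one_mem_Reg : (1 : FreeAlgebra K (Fin n)) ∈ Reg K n :=
  Submodule.subset_span ⟨0, 0, by simp⟩

lemma J_mul_left (a y : FreeAlgebra K (Fin n)) (hy : y ∈ Jspan K n b) :
    a * y ∈ Jspan K n b := by
  refine Submodule.span_induction ?_ ?_ ?_ ?_ hy
  · rintro x ⟨P, Q, X, Y, rfl⟩
    exact Submodule.subset_span ⟨a * P, Q, X, Y, by noncomm_ring⟩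
  · simp
  · intro x y _ _ hx hy
    rw [mul_add]; exact add_mem hx hy
  · intro c x _ hx
    rw [mul_smul_comm]; exact Submodule.smul_mem _ _ hx

lemma J_mul_right (a y : FreeAlgebra K (Fin n)) (hy : y ∈ Jspan K n b) :
    y * a ∈ Jspan K n b := by
  refine Submodule.span_induction ?_ ?_ ?_ ?_ hy
  · rintro x ⟨P, Q, X, Y, rfl⟩
    exact Submodule.subset_span ⟨P, Q * a, X, Y, by noncomm_ring⟩
  · simp
  · intro x y _ _ hx hy
    rw [add_mul]; exact add_mem hx hy
  · intro c x _ hx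
    rw [smul_mul_assoc]; exact Submodule.smul_mem _ _ hx

lemma emb_basis (i : Fin n) : emb K n b (b i) = ι i := by
  unfold emb
  rw [b.repr_self]
  rw [Finset.sum_congr rfl fun k _ => by rw [Finsupp.single_apply]]
  simp

lemma word_mem_Fdeg (l : List (Fin n)) (k : ℕ) (h : l.length ≤ k) :
    (l.map (FreeAlgebra.ι K)).prod ∈ Fdeg K n k :=
  Submodule.subset_span ⟨l, h, rfl⟩

lemma Fdeg_mono {k k' : ℕ} (h : k ≤ k') : Fdeg K n k ≤ Fdeg K n k' :=
  Submodule.span_mono fun _ ⟨l, hl, e⟩ => ⟨l, hl.trans h, e⟩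

lemma Fdeg_mul {k k' : ℕ} {y z : FreeAlgebra K (Fin n)}
    (hy : y ∈ Fdeg K n k) (hz : z ∈ Fdeg K n k') : y * z ∈ Fdeg K n (k + k') := by
  refine Submodule.span_induction ?_ ?_ ?_ ?_ hy
  · rintro x ⟨u, hu, rfl⟩
    refine Submodule.span_induction ?_ ?_ ?_ ?_ hz
    · rintro x ⟨l, hl, rfl⟩
      rw [← List.prod_append, ← List.map_append]
      exact word_mem_Fdeg K n _ _ (by simpa using Nat.add_le_add hu hl)
    · simp
    · intro x y _ _ hx hy
      rw [mul_add]; exact add_mem hx hy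
    · intro c x _ hx
      rw [mul_smul_comm]; exact Submodule.smul_mem _ _ hx
  · simp
  · intro x y _ _ hx hy
    rw [add_mul]; exact add_mem hx hy
  · intro c x _ hx
    rw [smul_mul_assoc]; exact Submodule.smul_mem _ _ hx

lemma emb_mem_Fdeg (X : L) : emb K n b X ∈ Fdeg K n 1 := by
  unfold emb
  refine sum_mem fun k _ => Submodule.smul_mem _ _ ?_
  have : (ι k : FreeAlgebra K (Fin n)) = ([k].map (FreeAlgebra.ι K)).prod := by simp
  rw [this]
  exact word_mem_Fdeg K n _ _ (by simp)

lemma swap_step (u v : List (Fin n)) (a c : Fin n) :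
    ((u ++ a :: c :: v).map (FreeAlgebra.ι K)).prod
      - ((u ++ c :: a :: v).map (FreeAlgebra.ι K)).prod
      ∈ Jspan K n b ⊔ Fdeg K n (u.length + 1 + v.length) := by
  set P := (u.map (FreeAlgebra.ι K)).prod with hP
  set Q := (v.map (FreeAlgebra.ι K)).prod with hQ
  set e := emb K n b ⁅b a, b c⁆ with he
  have h1 : ((u ++ a :: c :: v).map (FreeAlgebra.ι K)).prod = P * (ι a * (ι c * Q)) := by
    simp [List.map_append, List.prod_append, List.prod_cons, mul_assoc, hP, hQ]
  have h2 : ((u ++ c :: a :: v).map (FreeAlgebra.ι K)).prod = P * (ι c * (ι a * Q)) := by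
    simp [List.map_append, List.prod_append, List.prod_cons, mul_assoc, hP, hQ]
  have key : P * (ι a * (ι c * Q)) - P * (ι c * (ι a * Q))
      = P * (ι a * ι c - ι c * ι a - e) * Q + P * e * Q := by noncomm_ring
  rw [h1, h2, key]
  refine add_mem (Submodule.mem_sup_left ?_) (Submodule.mem_sup_right ?_)
  · refine Submodule.subset_span ⟨P, Q, b a, b c, ?_⟩
    rw [emb_basis, emb_basis, he]
  · have := Fdeg_mul K n (Fdeg_mul K n (word_mem_Fdeg K n u u.length le_rfl)
      (emb_mem_Fdeg K n b ⁅b a, b c⁆)) (word_mem_Fdeg K n v v.length le_rfl)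
    exact this

lemma mul_mem_sup (a : Fin n) (y : FreeAlgebra K (Fin n)) (k : ℕ)
    (hy : y ∈ Jspan K n b ⊔ Fdeg K n k) :
    FreeAlgebra.ι K a * y ∈ Jspan K n b ⊔ Fdeg K n (k + 1) := by
  obtain ⟨j, hj, d, hd, rfl⟩ := Submodule.mem_sup.mp hy
  rw [mul_add]
  refine add_mem (Submodule.mem_sup_left (J_mul_left K n b _ _ hj))
    (Submodule.mem_sup_right ?_)
  have h1 : (ι a : FreeAlgebra K (Fin n)) ∈ Fdeg K n 1 := by
    have : (ι a : FreeAlgebra K (Fin n)) = ([a].map (FreeAlgebra.ι K)).prod := by simp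
    rw [this]; exact word_mem_Fdeg K n _ _ (by simp)
  have := Fdeg_mul K n h1 hd
  rwa [Nat.add_comm 1 k] at this

lemma perm_diff (l₁ l₂ : List (Fin n)) (h : l₁.Perm l₂) :
    (l₁.map (FreeAlgebra.ι K)).prod - (l₂.map (FreeAlgebra.ι K)).prod
      ∈ Jspan K n b ⊔ Fdeg K n (l₁.length - 1) := by
  induction h with
  | nil => simp
  | @cons a t₁ t₂ h ih =>
    rcases t₁ with _ | ⟨x, t⟩
    · rw [h.symm.eq_nil]
      simp
    · have hlen : t₂.length = (x :: t).length := (h.length_eq).symm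
      have step : (List.map (FreeAlgebra.ι K) (a :: x :: t)).prod
          - (List.map (FreeAlgebra.ι K) (a :: t₂)).prod
          = FreeAlgebra.ι K a * (((x :: t).map (FreeAlgebra.ι K)).prod
            - (t₂.map (FreeAlgebra.ι K)).prod) := by
        simp [List.prod_cons, mul_sub]
      rw [step]
      have := mul_mem_sup K n b a _ ((x :: t).length - 1) ih
      have harith : (x :: t).length - 1 + 1 = (a :: x :: t).length - 1 := by
        simp
      rwa [harith] at this
  | swap a c t =>
    have := swap_step K n b [] t c a
    simpa [Nat.add_comm] using this
  | @trans t₁ t₂ t₃ h₁₂ h₂₃ ih₁ ih₂ =>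
    have hlen : t₂.length = t₁.length := (h₁₂.length_eq).symm
    have : (t₁.map (FreeAlgebra.ι K)).prod - (t₃.map (FreeAlgebra.ι K)).prod
        = ((t₁.map (FreeAlgebra.ι K)).prod - (t₂.map (FreeAlgebra.ι K)).prod)
          + ((t₂.map (FreeAlgebra.ι K)).prod - (t₃.map (FreeAlgebra.ι K)).prod) := by
      abel
    rw [this]
    refine add_mem ih₁ ?_
    rwa [hlen] at ih₂

lemma symlist_mem_Reg (l : List (Fin n)) :
    (((l.length.factorial : K))⁻¹ •
      ∑ σ : Equiv.Perm (Fin l.length),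
        (List.ofFn fun j => FreeAlgebra.ι K (l.get (σ j))).prod) ∈ Reg K n := by
  classical
  set m := l.length with hm
  set x : Fin m → FreeAlgebra K (Fin n) := fun j => FreeAlgebra.ι K (l.get j) with hx
  have hofn : ∀ σ : Equiv.Perm (Fin m),
      (List.ofFn fun j => FreeAlgebra.ι K (l.get (σ j))) = List.ofFn (x ∘ σ) := by
    intro σ; rfl
  refine Submodule.smul_mem _ _ ?_
  rw [Finset.sum_congr rfl fun σ _ => by rw [hofn σ]]
  rw [← polarization x]
  refine sum_mem fun S _ => ?_
  rw [← Int.cast_smul_eq_zsmul K]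
  refine Submodule.smul_mem _ _ ?_
  have hpow : (∑ j ∈ S, x j) = ∑ i : Fin n,
      (((S.filter (fun j => l.get j = i)).card : K)) • FreeAlgebra.ι K i := by
    rw [← Finset.sum_fiberwise S (fun j => l.get j) (fun j => x j)]
    refine Finset.sum_congr rfl fun i _ => ?_
    have : ∀ j ∈ S.filter (fun j => l.get j = i), x j = FreeAlgebra.ι K i := by
      intro j hj
      simp only [Finset.mem_filter] at hj
      show FreeAlgebra.ι K (l.get j) = FreeAlgebra.ι K i
      rw [hj.2]
    rw [Finset.sum_congr rfl this, Finset.sum_const, Nat.cast_smul_eq_nsmul]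
  rw [hpow]
  exact Submodule.subset_span ⟨m, _, rfl⟩

end Aux

theorem exists_regular_congruent_mod_J (K : Type) [Field K] [CharZero K]
    (n : ℕ) (L : Type) [LieRing L] [LieAlgebra K L] (b : Module.Basis (Fin n) K L)
    (a : FreeAlgebra K (Fin n)) :
    ∃ r ∈ Reg K n, a - r ∈ Jspan K n b := by
  classical
  have key : ∀ m : ℕ, Fdeg K n m ≤ Reg K n ⊔ Jspan K n b := by
    intro m
    induction m with
    | zero =>
      refine Submodule.span_le.mpr ?_
      rintro x ⟨l, hl, rfl⟩
      rw [List.length_eq_zero_iff.mp (Nat.le_zero.mp hl)]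
      simpa using Submodule.mem_sup_left (one_mem_Reg K n)
    | succ m ih =>
      refine Submodule.span_le.mpr ?_
      rintro w ⟨l, hl, rfl⟩
      set k := l.length with hk
      set W := (l.map (FreeAlgebra.ι K)).prod with hW
      set avg := ((k.factorial : K))⁻¹ •
        ∑ σ : Equiv.Perm (Fin k),
          (List.ofFn fun j => FreeAlgebra.ι K (l.get (σ j))).prod with havgdef
      have hperm : ∀ σ : Equiv.Perm (Fin k),
          W - (List.ofFn fun j => FreeAlgebra.ι K (l.get (σ j))).prod
            ∈ Jspan K n b ⊔ Fdeg K n (k - 1) := by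
        intro σ
        have h1 : (List.ofFn fun j => FreeAlgebra.ι K (l.get (σ j))).prod
            = ((List.ofFn (l.get ∘ σ)).map (FreeAlgebra.ι K)).prod := by
          rw [List.map_ofFn]; rfl
        have h2 : l.Perm (List.ofFn (l.get ∘ σ)) := by
          have := Equiv.Perm.ofFn_comp_perm σ l.get
          rw [List.ofFn_get] at this
          exact this.symm
        rw [h1]
        exact perm_diff K n b _ _ h2
      have hsum : (∑ σ : Equiv.Perm (Fin k),
          (W - (List.ofFn fun j => FreeAlgebra.ι K (l.get (σ j))).prod))
            ∈ Jspan K n b ⊔ Fdeg K n (k - 1) :=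
        sum_mem fun σ _ => hperm σ
      have hsmul := Submodule.smul_mem _ ((k.factorial : K))⁻¹ hsum
      have hfac : (k.factorial : K) ≠ 0 :=
        Nat.cast_ne_zero.mpr (Nat.factorial_ne_zero k)
      have heq : ((k.factorial : K))⁻¹ • (∑ σ : Equiv.Perm (Fin k),
          (W - (List.ofFn fun j => FreeAlgebra.ι K (l.get (σ j))).prod))
          = W - avg := by
        rw [Finset.sum_sub_distrib, Finset.sum_const, Finset.card_univ,
          Fintype.card_perm, Fintype.card_fin, smul_sub, havgdef]
        congr 1
        rw [← Nat.cast_smul_eq_nsmul K, smul_smul, inv_mul_cancel₀ hfac, one_smul]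
      rw [heq] at hsmul
      have havg : avg ∈ Reg K n := symlist_mem_Reg K n l
      have hsub : Jspan K n b ⊔ Fdeg K n (k - 1) ≤ Reg K n ⊔ Jspan K n b :=
        sup_le le_sup_right ((Fdeg_mono K n (by omega : k - 1 ≤ m)).trans ih)
      have : W = avg + (W - avg) := by abel
      rw [this]
      exact add_mem (Submodule.mem_sup_left havg) (hsub hsmul)
  have hfin : ∃ m, a ∈ Fdeg K n m := by
    have h1 : (1 : FreeAlgebra K (Fin n)) ∈ Fdeg K n 0 :=
      Submodule.subset_span ⟨[], by simp, by simp⟩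
    induction a using FreeAlgebra.induction with
    | grade0 r =>
      exact ⟨0, by rw [Algebra.algebraMap_eq_smul_one]; exact Submodule.smul_mem _ _ h1⟩
    | grade1 i =>
      exact ⟨1, Submodule.subset_span ⟨[i], by simp, by simp⟩⟩
    | mul x y ihx ihy =>
      obtain ⟨m1, hm1⟩ := ihx
      obtain ⟨m2, hm2⟩ := ihy
      exact ⟨m1 + m2, Fdeg_mul K n hm1 hm2⟩
    | add x y ihx ihy =>
      obtain ⟨m1, hm1⟩ := ihx
      obtain ⟨m2, hm2⟩ := ihy
      exact ⟨max m1 m2, add_mem (Fdeg_mono K n (le_max_left m1 m2) hm1)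
        (Fdeg_mono K n (le_max_right m1 m2) hm2)⟩
  obtain ⟨m, hm⟩ := hfin
  obtain ⟨r, hr, j, hj, hrj⟩ := Submodule.mem_sup.mp (key m hm)
  refine ⟨r, hr, ?_⟩
  have : a - r = j := by rw [← hrj]; abel
  rw [this]
  exact hj

end
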